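/- If a 3×3 positive definite correlation matrix has exactly one negative off-diagonal correlation (the other two strictly positive), then δ123 < 0, i.e. the triple is a synergy. -/

import Mathlib

open Real

noncomputable def corrMat (ρ12 ρ13 ρ23 : ℝ) : Matrix (Fin 3) (Fin 3) ℝ :=
  !![1, ρ12, ρ13; ρ12, 1, ρ23; ρ13, ρ23, 1]

noncomputable def gaussEnt (ρ12 ρ13 ρ23 : ℝ) (A : Finset (Fin 3)) : ℝ :=
  (1 / 2) * Real.log
    (((corrMat ρ12 ρ13 ρ23).submatrix
        (fun i : A => (i : Fin 3)) (fun j : A => (j : Fin 3))).det)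

noncomputable def delta123 (ρ12 ρ13 ρ23 : ℝ) : ℝ :=
  gaussEnt ρ12 ρ13 ρ23 {0, 1, 2}
    - gaussEnt ρ12 ρ13 ρ23 {0, 1} - gaussEnt ρ12 ρ13 ρ23 {0, 2}
    - gaussEnt ρ12 ρ13 ρ23 {1, 2}
    + gaussEnt ρ12 ρ13 ρ23 {0} + gaussEnt ρ12 ρ13 ρ23 {1}
    + gaussEnt ρ12 ρ13 ρ23 {2}

noncomputable def partialCorr (ρ12 ρ13 ρ23 : ℝ) : ℝ :=
  (ρ12 - ρ13 * ρ23) / Real.sqrt ((1 - ρ13 ^ 2) * (1 - ρ23 ^ 2))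

section aux

def eTrip : Fin 3 ≃ (({0,1,2} : Finset (Fin 3)) : Type) where
  toFun i := ⟨i, by fin_cases i <;> decide⟩
  invFun x := x
  left_inv := by decide
  right_inv := by decide

def ePair01 : Fin 2 ≃ (({0,1} : Finset (Fin 3)) : Type) where
  toFun i := ⟨⟨i, by omega⟩, by fin_cases i <;> decide⟩
  invFun x := if (x : Fin 3) = 0 then 0 else 1
  left_inv := by decide
  right_inv := by decide

def ePair02 : Fin 2 ≃ (({0,2} : Finset (Fin 3)) : Type) where
  toFun i := ⟨⟨2 * i, by omega⟩, by fin_cases i <;> decide⟩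
  invFun x := if (x : Fin 3) = 0 then 0 else 1
  left_inv := by decide
  right_inv := by decide

def ePair12 : Fin 2 ≃ (({1,2} : Finset (Fin 3)) : Type) where
  toFun i := ⟨⟨i + 1, by omega⟩, by fin_cases i <;> decide⟩
  invFun x := if (x : Fin 3) = 1 then 0 else 1
  left_inv := by decide
  right_inv := by decide

def eSing0 : Fin 1 ≃ (({0} : Finset (Fin 3)) : Type) where
  toFun _ := ⟨0, by decide⟩
  invFun _ := 0
  left_inv := by decide
  right_inv := by decide

def eSing1 : Fin 1 ≃ (({1} : Finset (Fin 3)) : Type) where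
  toFun _ := ⟨1, by decide⟩
  invFun _ := 0
  left_inv := by decide
  right_inv := by decide

def eSing2 : Fin 1 ≃ (({2} : Finset (Fin 3)) : Type) where
  toFun _ := ⟨2, by decide⟩
  invFun _ := 0
  left_inv := by decide
  right_inv := by decide

lemma gauss_trip (a b c : ℝ) :
    gaussEnt a b c {0,1,2} = (1/2) * Real.log (1 - a^2 - b^2 - c^2 + 2*a*b*c) := by
  unfold gaussEnt
  rw [← Matrix.det_submatrix_equiv_self eTrip]
  simp only [Matrix.submatrix, Matrix.det_fin_three, corrMat, eTrip]
  norm_num [Matrix.cons_val_zero, Matrix.cons_val_one, Matrix.cons_val_two, Matrix.tail_cons, Matrix.head_cons]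
  ring_nf

lemma gauss_pair01 (a b c : ℝ) :
    gaussEnt a b c {0,1} = (1/2) * Real.log (1 - a^2) := by
  unfold gaussEnt
  rw [← Matrix.det_submatrix_equiv_self ePair01]
  simp only [Matrix.submatrix, Matrix.det_fin_two, corrMat, ePair01]
  norm_num
  ring_nf

lemma gauss_pair02 (a b c : ℝ) :
    gaussEnt a b c {0,2} = (1/2) * Real.log (1 - b^2) := by
  unfold gaussEnt
  rw [← Matrix.det_submatrix_equiv_self ePair02]
  simp only [Matrix.submatrix, Matrix.det_fin_two, corrMat, ePair02]
  norm_num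
  ring_nf

lemma gauss_pair12 (a b c : ℝ) :
    gaussEnt a b c {1,2} = (1/2) * Real.log (1 - c^2) := by
  unfold gaussEnt
  rw [← Matrix.det_submatrix_equiv_self ePair12]
  simp only [Matrix.submatrix, Matrix.det_fin_two, corrMat, ePair12]
  norm_num
  ring_nf

lemma gauss_sing0 (a b c : ℝ) : gaussEnt a b c {0} = 0 := by
  unfold gaussEnt
  rw [← Matrix.det_submatrix_equiv_self eSing0]
  simp [Matrix.submatrix, Matrix.det_fin_one, corrMat, eSing0]

lemma gauss_sing1 (a b c : ℝ) : gaussEnt a b c {1} = 0 := by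
  unfold gaussEnt
  rw [← Matrix.det_submatrix_equiv_self eSing1]
  simp [Matrix.submatrix, Matrix.det_fin_one, corrMat, eSing1]

lemma gauss_sing2 (a b c : ℝ) : gaussEnt a b c {2} = 0 := by
  unfold gaussEnt
  rw [← Matrix.det_submatrix_equiv_self eSing2]
  simp [Matrix.submatrix, Matrix.det_fin_one, corrMat, eSing2]

lemma one_sub_sq_pos_12 (a b c : ℝ) (hpd : (corrMat a b c).PosDef) : 0 < 1 - a^2 := by
  have h1 := hpd.dotProduct_mulVec_pos (x := ![1, 1, 0]) (by intro h; have := congrFun h 0; simp at this)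
  have h2 := hpd.dotProduct_mulVec_pos (x := ![1, -1, 0]) (by intro h; have := congrFun h 0; simp at this)
  simp [corrMat, Matrix.mulVec, dotProduct, Fin.sum_univ_three] at h1 h2
  nlinarith

lemma one_sub_sq_pos_13 (a b c : ℝ) (hpd : (corrMat a b c).PosDef) : 0 < 1 - b^2 := by
  have h1 := hpd.dotProduct_mulVec_pos (x := ![1, 0, 1]) (by intro h; have := congrFun h 0; simp at this)
  have h2 := hpd.dotProduct_mulVec_pos (x := ![1, 0, -1]) (by intro h; have := congrFun h 0; simp at this)
  simp [corrMat, Matrix.mulVec, dotProduct, Fin.sum_univ_three] at h1 h2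
  nlinarith

lemma one_sub_sq_pos_23 (a b c : ℝ) (hpd : (corrMat a b c).PosDef) : 0 < 1 - c^2 := by
  have h1 := hpd.dotProduct_mulVec_pos (x := ![0, 1, 1]) (by intro h; have := congrFun h 1; simp at this)
  have h2 := hpd.dotProduct_mulVec_pos (x := ![0, 1, -1]) (by intro h; have := congrFun h 1; simp at this)
  simp [corrMat, Matrix.mulVec, dotProduct, Fin.sum_univ_three] at h1 h2
  nlinarith

end aux

theorem stmt_14 (ρ12 ρ13 ρ23 : ℝ) (hpd : (corrMat ρ12 ρ13 ρ23).PosDef)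
    (hneg : (ρ12 < 0 ∧ 0 < ρ13 ∧ 0 < ρ23)
      ∨ (ρ13 < 0 ∧ 0 < ρ12 ∧ 0 < ρ23)
      ∨ (ρ23 < 0 ∧ 0 < ρ12 ∧ 0 < ρ13)) :
    delta123 ρ12 ρ13 ρ23 < 0 := by
  set a := ρ12; set b := ρ13; set c := ρ23
  have hp12 := one_sub_sq_pos_12 a b c hpd
  have hp13 := one_sub_sq_pos_13 a b c hpd
  have hp23 := one_sub_sq_pos_23 a b c hpd
  have hdet : (corrMat a b c).det = 1 - a^2 - b^2 - c^2 + 2*a*b*c := by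
    simp [corrMat, Matrix.det_fin_three]; ring
  have hd : 0 < 1 - a^2 - b^2 - c^2 + 2*a*b*c := by
    rw [← hdet]; exact hpd.det_pos
  have habc : a * b * c < 0 := by
    rcases hneg with ⟨h1, h2, h3⟩ | ⟨h1, h2, h3⟩ | ⟨h1, h2, h3⟩ <;> nlinarith [mul_pos h2 h3]
  have hlt : 1 - a^2 - b^2 - c^2 + 2*a*b*c < (1 - a^2) * ((1 - b^2) * (1 - c^2)) := by
    nlinarith [mul_nonneg (sq_nonneg (a*b)) hp23.le, sq_nonneg (a*c), sq_nonneg (b*c)]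
  have key : Real.log (1 - a^2 - b^2 - c^2 + 2*a*b*c)
      < Real.log ((1 - a^2) * ((1 - b^2) * (1 - c^2))) := Real.log_lt_log hd hlt
  rw [Real.log_mul (by positivity) (by positivity),
      Real.log_mul (by positivity) (by positivity)] at key
  unfold delta123
  rw [gauss_trip, gauss_pair01, gauss_pair02, gauss_pair12,
      gauss_sing0, gauss_sing1, gauss_sing2]
  linarith
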